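/- Let φ(1), …, φ(N) ∈ ℝ^d and let 0 < m ≤ M < ∞ satisfy m·I ⪯ Σ_{t=1}^{N} φ(t)·φ(t)ᵀ ⪯ M·I (in the positive semidefinite order). If 0 < α < 1/M, then the operator norm of the product ∏_{t=1}^{N} (I − α·φ(t)·φ(t)ᵀ) (in any fixed order of the factors) is strictly less than 1. -/

import Mathlib

open Matrix Finset

open scoped Matrix.Norms.L2Operator

namespace SGDAux

variable {d : ℕ}

lemma vecMulVec_mulVec' (u v x : Fin d → ℝ) :
    (Matrix.vecMulVec u v) *ᵥ x = (v ⬝ᵥ x) • u := by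
  ext i
  simp only [Matrix.mulVec, Matrix.vecMulVec_apply, dotProduct, Pi.smul_apply, smul_eq_mul,
    Finset.sum_mul, Finset.mul_sum]
  exact Finset.sum_congr rfl fun j _ => by ring

lemma factor_mulVec (α : ℝ) (φ x : Fin d → ℝ) :
    ((1 : Matrix (Fin d) (Fin d) ℝ) - α • Matrix.vecMulVec φ φ) *ᵥ x
      = x - (α * (φ ⬝ᵥ x)) • φ := by
  rw [Matrix.sub_mulVec, Matrix.one_mulVec, Matrix.smul_mulVec, vecMulVec_mulVec',
    smul_smul]

lemma step_q (α : ℝ) (φ x : Fin d → ℝ) :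
    (((1 : Matrix (Fin d) (Fin d) ℝ) - α • Matrix.vecMulVec φ φ) *ᵥ x) ⬝ᵥ
        (((1 : Matrix (Fin d) (Fin d) ℝ) - α • Matrix.vecMulVec φ φ) *ᵥ x)
      = x ⬝ᵥ x - α * (φ ⬝ᵥ x) ^ 2 * (2 - α * (φ ⬝ᵥ φ)) := by
  rw [factor_mulVec]
  simp only [sub_dotProduct, dotProduct_sub, smul_dotProduct, dotProduct_smul, smul_eq_mul,
    dotProduct_comm φ x]
  ring

lemma dotProduct_self_nonneg (x : Fin d → ℝ) : 0 ≤ x ⬝ᵥ x :=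
  Finset.sum_nonneg fun i _ => mul_self_nonneg _

lemma prod_q (α : ℝ) (φ : ℕ → Fin d → ℝ) (hα : 0 < α) :
    ∀ (l : List ℕ), (∀ t ∈ l, α * ((φ t) ⬝ᵥ (φ t)) < 2) → ∀ (x : Fin d → ℝ),
      (((l.map fun t => (1 : Matrix (Fin d) (Fin d) ℝ)
          - α • Matrix.vecMulVec (φ t) (φ t)).prod) *ᵥ x) ⬝ᵥ
        (((l.map fun t => (1 : Matrix (Fin d) (Fin d) ℝ)
          - α • Matrix.vecMulVec (φ t) (φ t)).prod) *ᵥ x) < x ⬝ᵥ x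
      ∨ ((((l.map fun t => (1 : Matrix (Fin d) (Fin d) ℝ)
          - α • Matrix.vecMulVec (φ t) (φ t)).prod) *ᵥ x) = x ∧ ∀ t ∈ l, (φ t) ⬝ᵥ x = 0) := by
  intro l
  induction l with
  | nil => intro _ x; right; simp
  | cons t l ih =>
    intro hb x
    have hbt : α * ((φ t) ⬝ᵥ (φ t)) < 2 := hb t List.mem_cons_self
    have hbl : ∀ s ∈ l, α * ((φ s) ⬝ᵥ (φ s)) < 2 := fun s hs => hb s (List.mem_cons_of_mem _ hs)
    set A : Matrix (Fin d) (Fin d) ℝ :=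
      (1 : Matrix (Fin d) (Fin d) ℝ) - α • Matrix.vecMulVec (φ t) (φ t) with hA
    set Q : Matrix (Fin d) (Fin d) ℝ :=
      (l.map fun s => (1 : Matrix (Fin d) (Fin d) ℝ)
        - α • Matrix.vecMulVec (φ s) (φ s)).prod with hQ
    have hprod : ((t :: l).map fun s => (1 : Matrix (Fin d) (Fin d) ℝ)
        - α • Matrix.vecMulVec (φ s) (φ s)).prod = A * Q := by
      simp [hA, hQ]
    rw [hprod, ← Matrix.mulVec_mulVec]
    set z : Fin d → ℝ := Q *ᵥ x with hz
    have hqA : (A *ᵥ z) ⬝ᵥ (A *ᵥ z) = z ⬝ᵥ z - α * ((φ t) ⬝ᵥ z) ^ 2 * (2 - α * ((φ t) ⬝ᵥ (φ t))) :=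
      step_q α (φ t) z
    have hfac : 0 ≤ α * ((φ t) ⬝ᵥ z) ^ 2 * (2 - α * ((φ t) ⬝ᵥ (φ t))) :=
      mul_nonneg (mul_nonneg hα.le (sq_nonneg _)) (by linarith)
    rcases ih hbl x with h | ⟨hfix, hdots⟩
    · left
      calc (A *ᵥ z) ⬝ᵥ (A *ᵥ z) ≤ z ⬝ᵥ z := by rw [hqA]; linarith
        _ < x ⬝ᵥ x := h
    · rw [← hz] at hfix
      by_cases hc : (φ t) ⬝ᵥ x = 0
      · right
        constructor
        · rw [hfix, factor_mulVec, hc, mul_zero, zero_smul, sub_zero]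
        · intro s hs
          rcases List.mem_cons.mp hs with rfl | hs
          · exact hc
          · exact hdots s hs
      · left
        rw [hfix] at hqA ⊢
        have hpos : 0 < α * ((φ t) ⬝ᵥ x) ^ 2 * (2 - α * ((φ t) ⬝ᵥ (φ t))) :=
          mul_pos (mul_pos hα (by positivity)) (by linarith)
        rw [hqA]; linarith

end SGDAux

/-- under persistent excitation
`m·I ⪯ ∑_{t=1}^{N} φ(t)φ(t)ᵀ ⪯ M·I` and step size `0 < α < 1/M`, the product
`∏_{t=1}^{N} (I − α φ(t)φ(t)ᵀ)`, in any fixed order of the factors, has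
(L2) operator norm strictly less than 1. -/
theorem sgd_contraction_product_norm_lt_one
    (d N : ℕ) (φ : ℕ → Fin d → ℝ) (m M α : ℝ)
    (hm : 0 < m) (hmM : m ≤ M)
    (hlow : (((∑ t ∈ Finset.Icc 1 N, Matrix.vecMulVec (φ t) (φ t))
        - m • (1 : Matrix (Fin d) (Fin d) ℝ))).PosSemidef)
    (hhigh : ((M • (1 : Matrix (Fin d) (Fin d) ℝ))
        - ∑ t ∈ Finset.Icc 1 N, Matrix.vecMulVec (φ t) (φ t)).PosSemidef)
    (hα0 : 0 < α) (hα : α < 1 / M)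
    (σ : Equiv.Perm (Fin N)) :
    ‖(List.ofFn fun k : Fin N =>
        (1 : Matrix (Fin d) (Fin d) ℝ)
          - α • Matrix.vecMulVec (φ ((σ k : ℕ) + 1)) (φ ((σ k : ℕ) + 1))).prod‖ < 1 := by
  classical
  have hM : 0 < M := hm.trans_le hmM
  have hαM : α * M < 1 := (lt_div_iff₀ hM).mp hα
  -- dot product quadratic form of the sum
  have hsumdot : ∀ x : Fin d → ℝ,
      x ⬝ᵥ ((∑ t ∈ Finset.Icc 1 N, Matrix.vecMulVec (φ t) (φ t)) *ᵥ x)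
        = ∑ t ∈ Finset.Icc 1 N, ((φ t) ⬝ᵥ x) ^ 2 := by
    intro x
    have hsum : (∑ t ∈ Finset.Icc 1 N, Matrix.vecMulVec (φ t) (φ t)) *ᵥ x
        = ∑ t ∈ Finset.Icc 1 N, (Matrix.vecMulVec (φ t) (φ t)) *ᵥ x := by
      ext j
      simp only [Matrix.mulVec, dotProduct, Finset.sum_apply, Matrix.sum_apply, Finset.sum_mul]
      exact Finset.sum_comm
    have h2 : x ⬝ᵥ (∑ t ∈ Finset.Icc 1 N, (Matrix.vecMulVec (φ t) (φ t)) *ᵥ x)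
        = ∑ t ∈ Finset.Icc 1 N, x ⬝ᵥ ((Matrix.vecMulVec (φ t) (φ t)) *ᵥ x) := by
      simp only [dotProduct, Finset.sum_apply, Finset.mul_sum]
      exact Finset.sum_comm
    rw [hsum, h2]
    refine Finset.sum_congr rfl fun t _ => ?_
    rw [SGDAux.vecMulVec_mulVec', dotProduct_smul, smul_eq_mul, dotProduct_comm x (φ t), sq]
  have hstar : ∀ x : Fin d → ℝ, star x = x := fun x => funext fun i => by simp
  have hub : ∀ x : Fin d → ℝ,
      ∑ t ∈ Finset.Icc 1 N, ((φ t) ⬝ᵥ x) ^ 2 ≤ M * (x ⬝ᵥ x) := by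
    intro x
    have h := hhigh.dotProduct_mulVec_nonneg x
    rw [hstar, Matrix.sub_mulVec, dotProduct_sub, Matrix.smul_mulVec,
      Matrix.one_mulVec, dotProduct_smul, smul_eq_mul, hsumdot] at h
    linarith
  have hlb : ∀ x : Fin d → ℝ,
      m * (x ⬝ᵥ x) ≤ ∑ t ∈ Finset.Icc 1 N, ((φ t) ⬝ᵥ x) ^ 2 := by
    intro x
    have h := hlow.dotProduct_mulVec_nonneg x
    rw [hstar, Matrix.sub_mulVec, dotProduct_sub, Matrix.smul_mulVec,
      Matrix.one_mulVec, dotProduct_smul, smul_eq_mul, hsumdot] at h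
    linarith
  -- each regressor in the window has squared norm at most M
  have hφM : ∀ t ∈ Finset.Icc 1 N, (φ t) ⬝ᵥ (φ t) ≤ M := by
    intro t ht
    have h1 : ((φ t) ⬝ᵥ (φ t)) ^ 2 ≤ ∑ s ∈ Finset.Icc 1 N, ((φ s) ⬝ᵥ (φ t)) ^ 2 :=
      Finset.single_le_sum (f := fun s => ((φ s) ⬝ᵥ (φ t)) ^ 2) (fun s _ => sq_nonneg _) ht
    have h2 := hub (φ t)
    have hq := SGDAux.dotProduct_self_nonneg (φ t)
    rcases eq_or_lt_of_le hq with hq0 | hq0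
    · rw [← hq0]; exact hM.le
    · nlinarith
  -- the list of time indices
  set lt : List ℕ := List.ofFn (fun k : Fin N => (σ k : ℕ) + 1) with hlt
  have hmem : ∀ t ∈ lt, t ∈ Finset.Icc 1 N := by
    intro t ht
    rw [hlt, List.mem_ofFn] at ht
    obtain ⟨k, rfl⟩ := ht
    exact Finset.mem_Icc.mpr ⟨Nat.le_add_left 1 _, Nat.succ_le_of_lt (σ k).isLt⟩
  have hb : ∀ t ∈ lt, α * ((φ t) ⬝ᵥ (φ t)) < 2 := by
    intro t ht
    have := hφM t (hmem t ht)
    nlinarith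
  set P : Matrix (Fin d) (Fin d) ℝ :=
    (List.ofFn fun k : Fin N =>
        (1 : Matrix (Fin d) (Fin d) ℝ)
          - α • Matrix.vecMulVec (φ ((σ k : ℕ) + 1)) (φ ((σ k : ℕ) + 1))).prod with hP
  have hPl : P = ((lt.map fun t => (1 : Matrix (Fin d) (Fin d) ℝ)
      - α • Matrix.vecMulVec (φ t) (φ t))).prod := by
    rw [hP, hlt, List.map_ofFn]
    rfl
  -- pointwise strict contraction
  have hstrict : ∀ x : Fin d → ℝ, x ⬝ᵥ x = 1 → (P *ᵥ x) ⬝ᵥ (P *ᵥ x) < 1 := by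
    intro x hx
    rcases SGDAux.prod_q α φ hα0 lt hb x with h | ⟨_, hdots⟩
    · rw [← hPl] at h; rw [← hx]; exact h
    · exfalso
      have hall : ∀ t ∈ Finset.Icc 1 N, (φ t) ⬝ᵥ x = 0 := by
        intro t ht
        rw [Finset.mem_Icc] at ht
        have hk : t - 1 < N := by omega
        have : t = (σ (σ.symm ⟨t - 1, hk⟩) : ℕ) + 1 := by
          rw [Equiv.apply_symm_apply, Fin.val_mk]; omega
        rw [this]
        exact hdots _ (by rw [hlt, List.mem_ofFn]; exact ⟨σ.symm ⟨t - 1, hk⟩, rfl⟩)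
      have hsum0 : ∑ t ∈ Finset.Icc 1 N, ((φ t) ⬝ᵥ x) ^ 2 = 0 :=
        Finset.sum_eq_zero fun t ht => by rw [hall t ht]; ring
      have := hlb x
      rw [hsum0, hx, mul_one] at this
      linarith
  -- handle the degenerate dimension-zero case
  rcases Nat.eq_zero_or_pos d with hd | hd
  · subst hd
    have : P = 0 := Subsingleton.elim _ _
    rw [this, norm_zero]
    norm_num
  -- now use compactness of the sphere in Euclidean space
  rw [Matrix.cstar_norm_def]
  set T := Matrix.toEuclideanCLM (𝕜 := ℝ) P with hT
  have hTapp : ∀ x : EuclideanSpace ℝ (Fin d),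
      T x = (WithLp.equiv 2 (Fin d → ℝ)).symm (P *ᵥ (WithLp.equiv 2 (Fin d → ℝ) x)) := by
    intro x
    rfl
  have hnormq : ∀ y : EuclideanSpace ℝ (Fin d),
      (WithLp.equiv 2 (Fin d → ℝ) y) ⬝ᵥ (WithLp.equiv 2 (Fin d → ℝ) y) = ‖y‖ ^ 2 := by
    intro y
    rw [← real_inner_self_eq_norm_sq]
    simp only [PiLp.inner_apply, RCLike.inner_apply, conj_trivial]
    rfl
  -- strict contraction on the unit sphere, in Euclidean norm
  have hsphere : ∀ x : EuclideanSpace ℝ (Fin d), ‖x‖ = 1 → ‖T x‖ < 1 := by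
    intro x hx
    have h1 : (WithLp.equiv 2 (Fin d → ℝ) x) ⬝ᵥ (WithLp.equiv 2 (Fin d → ℝ) x) = 1 := by
      rw [hnormq, hx]; norm_num
    have h2 := hstrict _ h1
    have h3 : ‖T x‖ ^ 2 < 1 := by
      have : (WithLp.equiv 2 (Fin d → ℝ) (T x)) = P *ᵥ (WithLp.equiv 2 (Fin d → ℝ) x) := by
        rw [hTapp, Equiv.apply_symm_apply]
      rw [← hnormq (T x), this]
      exact h2
    nlinarith [norm_nonneg (T x)]
  -- the sphere is compact and nonempty; take the maximizer
  obtain ⟨i⟩ : Nonempty (Fin d) := ⟨⟨0, hd⟩⟩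
  have hne : (Metric.sphere (0 : EuclideanSpace ℝ (Fin d)) 1).Nonempty :=
    ⟨EuclideanSpace.single i 1, by simp [mem_sphere_zero_iff_norm, EuclideanSpace.norm_single]⟩
  have hcont : Continuous fun x : EuclideanSpace ℝ (Fin d) => ‖T x‖ :=
    T.continuous.norm
  obtain ⟨x₀, hx₀mem, hx₀max⟩ :=
    (isCompact_sphere (0 : EuclideanSpace ℝ (Fin d)) 1).exists_isMaxOn hne hcont.continuousOn
  have hx₀ : ‖x₀‖ = 1 := mem_sphere_zero_iff_norm.mp hx₀mem
  set c : ℝ := ‖T x₀‖ with hc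
  have hc1 : c < 1 := hsphere x₀ hx₀
  have hc0 : 0 ≤ c := norm_nonneg _
  have hbound : ‖T‖ ≤ c := by
    refine T.opNorm_le_bound hc0 fun x => ?_
    rcases eq_or_ne x 0 with rfl | hx
    · simp
    · have hxn : ‖x‖ ≠ 0 := norm_ne_zero_iff.mpr hx
      have hmemu : (‖x‖⁻¹ • x) ∈ Metric.sphere (0 : EuclideanSpace ℝ (Fin d)) 1 := by
        rw [mem_sphere_zero_iff_norm, norm_smul, norm_inv, norm_norm,
          inv_mul_cancel₀ hxn]
      have hle : ‖T (‖x‖⁻¹ • x)‖ ≤ c := hx₀max hmemu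
      rw [ContinuousLinearMap.map_smul, norm_smul, norm_inv, norm_norm] at hle
      have hxpos : (0 : ℝ) < ‖x‖ := lt_of_le_of_ne (norm_nonneg x) (Ne.symm hxn)
      calc ‖T x‖ = ‖x‖ * (‖x‖⁻¹ * ‖T x‖) := by field_simp
        _ ≤ ‖x‖ * c := by exact mul_le_mul_of_nonneg_left hle hxpos.le
        _ = c * ‖x‖ := mul_comm _ _
  exact lt_of_le_of_lt hbound hc1
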